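/- Let S and A be finite nonempty sets, let d, n ≥ 1 be integers and λ > 0, B > 0 reals. Let φ : S×A → ℝ^d satisfy ‖φ(s,a)‖₂ ≤ 1 for all (s,a), and let w : S → ℝ^d be such that P(s′|s,a) := ⟨φ(s,a), w(s′)⟩ is, for every (s,a), a probability distribution over s′ ∈ S, and such that ‖Σ_{s′∈S} w(s′)·l(s′)‖₂ ≤ √d for every function l : S → [0,1]. Let μ be a distribution on S×A, set Σ_μ := n·Σ_{(s,a)} μ(s,a)·φ(s,a)φ(s,a)ᵀ + λ·I_d, and define the distribution ν on S×A by ν(s,a) := (1/|A|)·Σ_{(s̃,ã)} μ(s̃,ã)·P(s|s̃,ã). Let q′ be any distribution on S×A, let π : S → Δ(A) be a policy, and define q(s,a) := Σ_{(s̃,ã)} q′(s̃,ã)·P(s|s̃,ã)·π(a|s). Then for every g : S×A → [0,B]: E_{(s,a)∼q}[g(s,a)] ≤ E_{(s̃,ã)∼q′}[ ‖φ(s̃,ã)‖_{Σ_μ^{-1}} ] · √( n·|A|·E_{(s,a)∼ν}[g(s,a)²] + B²·λ·d ). Moreover, for any distribution ξ on S and any policy π, setting ρ(s,a) := ξ(s)/|A|,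 one has E_{s∼ξ, a∼π(s)}[g(s,a)] ≤ √( |A|·E_{(s,a)∼ρ}[g(s,a)²] ). -/

import Mathlib

open Finset Matrix

/-- Euclidean (ℓ²) norm of a finite-dimensional real vector. -/
noncomputable def l2norm {ι : Type*} [Fintype ι] (x : ι → ℝ) : ℝ :=
  Real.sqrt (∑ i, x i ^ 2)

/-- Matrix-weighted norm ‖x‖_M = √(xᵀ M x). -/
noncomputable def matNorm {ι : Type*} [Fintype ι] (M : Matrix ι ι ℝ) (x : ι → ℝ) : ℝ :=
  Real.sqrt (x ⬝ᵥ M.mulVec x)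

/-- Weighted Jensen / Cauchy-Schwarz: `(∑ w f)² ≤ ∑ w f²` when `w ≥ 0`, `∑ w ≤ 1`. -/
lemma jensen_sq {ι : Type*} [Fintype ι] (wt f : ι → ℝ) (h0 : ∀ i, 0 ≤ wt i)
    (h1 : ∑ i, wt i ≤ 1) : (∑ i, wt i * f i) ^ 2 ≤ ∑ i, wt i * f i ^ 2 := by
  have key := Finset.sum_mul_sq_le_sq_mul_sq Finset.univ
    (fun i => Real.sqrt (wt i)) (fun i => Real.sqrt (wt i) * f i)
  have e1 : ∀ i : ι, Real.sqrt (wt i) * (Real.sqrt (wt i) * f i) = wt i * f i := by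
    intro i; rw [← mul_assoc, Real.mul_self_sqrt (h0 i)]
  have e2 : ∀ i : ι, Real.sqrt (wt i) ^ 2 = wt i := fun i => Real.sq_sqrt (h0 i)
  have e3 : ∀ i : ι, (Real.sqrt (wt i) * f i) ^ 2 = wt i * f i ^ 2 := by
    intro i; rw [mul_pow, e2]
  calc (∑ i, wt i * f i) ^ 2
      = (∑ i, Real.sqrt (wt i) * (Real.sqrt (wt i) * f i)) ^ 2 := by
        congr 1; exact (Finset.sum_congr rfl fun i _ => (e1 i).symm)
    _ ≤ (∑ i, Real.sqrt (wt i) ^ 2) * ∑ i, (Real.sqrt (wt i) * f i) ^ 2 := key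
    _ = (∑ i, wt i) * ∑ i, wt i * f i ^ 2 := by
        rw [Finset.sum_congr rfl fun i _ => e2 i, Finset.sum_congr rfl fun i _ => e3 i]
    _ ≤ 1 * ∑ i, wt i * f i ^ 2 := by
        apply mul_le_mul_of_nonneg_right h1
        exact Finset.sum_nonneg fun i _ => mul_nonneg (h0 i) (sq_nonneg _)
    _ = _ := one_mul _

/-- Cauchy-Schwarz for a symmetric positive semidefinite bilinear form. -/
lemma psd_cs {d : ℕ} (M : Matrix (Fin d) (Fin d) ℝ)
    (hsym : ∀ x y : Fin d → ℝ, x ⬝ᵥ M *ᵥ y = y ⬝ᵥ M *ᵥ x)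
    (hpsd : ∀ x, 0 ≤ x ⬝ᵥ M *ᵥ x) (x y : Fin d → ℝ) :
    (x ⬝ᵥ M *ᵥ y) ^ 2 ≤ (x ⬝ᵥ M *ᵥ x) * (y ⬝ᵥ M *ᵥ y) := by
  have key : ∀ t : ℝ,
      0 ≤ (y ⬝ᵥ M *ᵥ y) * (t * t) + (2 * (x ⬝ᵥ M *ᵥ y)) * t + (x ⬝ᵥ M *ᵥ x) := by
    intro t
    have h0 := hpsd (x + t • y)
    have expand : (x + t • y) ⬝ᵥ M *ᵥ (x + t • y)
        = (y ⬝ᵥ M *ᵥ y) * (t * t) + (2 * (x ⬝ᵥ M *ᵥ y)) * t + (x ⬝ᵥ M *ᵥ x) := by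
      rw [Matrix.mulVec_add, Matrix.mulVec_smul, dotProduct_add, add_dotProduct,
        add_dotProduct, dotProduct_smul, smul_dotProduct, smul_dotProduct,
        dotProduct_smul, hsym y x]
      simp only [smul_eq_mul]
      ring
    linarith [expand ▸ h0]
  have hd := discrim_le_zero key
  rw [discrim] at hd
  nlinarith [hd]

/-- Quadratic-form formula for the regularized covariance matrix. -/
lemma quad_eq {S' : Type*} [Fintype S'] {d : ℕ} (φ : S' → Fin d → ℝ) (μ : S' → ℝ)
    (c lam : ℝ) (x y : Fin d → ℝ) :
    x ⬝ᵥ ((c • (∑ p, μ p • vecMulVec (φ p) (φ p)) +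
        lam • (1 : Matrix (Fin d) (Fin d) ℝ)) *ᵥ y)
      = c * ∑ p, μ p * ((φ p ⬝ᵥ x) * (φ p ⬝ᵥ y)) + lam * (x ⬝ᵥ y) := by
  simp only [Matrix.mulVec, dotProduct, Matrix.add_apply, Matrix.smul_apply,
    Matrix.sum_apply, Matrix.vecMulVec_apply, Matrix.one_apply, smul_eq_mul]
  have inner : ∀ i, (∑ j, (c * ∑ p, μ p * (φ p i * φ p j)
        + lam * if i = j then (1:ℝ) else 0) * y j)
      = c * (∑ p, μ p * (φ p i * (∑ j, φ p j * y j))) + lam * y i := by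
    intro i
    calc ∑ j, (c * ∑ p, μ p * (φ p i * φ p j) + lam * if i = j then (1:ℝ) else 0) * y j
        = ∑ j, ((c * ∑ p, μ p * (φ p i * φ p j)) * y j
            + (lam * if i = j then (1:ℝ) else 0) * y j) :=
          Finset.sum_congr rfl fun j _ => by ring
      _ = ∑ j, (c * ∑ p, μ p * (φ p i * φ p j)) * y j
            + ∑ j, (lam * if i = j then (1:ℝ) else 0) * y j := Finset.sum_add_distrib
      _ = c * (∑ p, μ p * (φ p i * (∑ j, φ p j * y j))) + lam * y i := by
          congr 1
          · rw [show (∑ j, (c * ∑ p, μ p * (φ p i * φ p j)) * y j)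
                = ∑ j, ∑ p, c * (μ p * (φ p i * (φ p j * y j))) from
                Finset.sum_congr rfl fun j _ => by
                  rw [Finset.mul_sum, Finset.sum_mul]
                  exact Finset.sum_congr rfl fun p _ => by ring,
              Finset.sum_comm, Finset.mul_sum]
            refine Finset.sum_congr rfl fun p _ => ?_
            calc ∑ j, c * (μ p * (φ p i * (φ p j * y j)))
                = ∑ j, (c * (μ p * φ p i)) * (φ p j * y j) :=
                  Finset.sum_congr rfl fun j _ => by ring
              _ = (c * (μ p * φ p i)) * ∑ j, φ p j * y j := (Finset.mul_sum _ _ _).symm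
              _ = c * (μ p * (φ p i * ∑ j, φ p j * y j)) := by ring
          · simp
  rw [Finset.sum_congr rfl fun i _ => congrArg (x i * ·) (inner i)]
  calc ∑ i, x i * (c * (∑ p, μ p * (φ p i * ∑ j, φ p j * y j)) + lam * y i)
      = ∑ i, (∑ p, c * (μ p * ((φ p i * x i) * ∑ j, φ p j * y j)) + lam * (x i * y i)) :=
        Finset.sum_congr rfl fun i _ => by
          rw [mul_add, Finset.mul_sum, Finset.mul_sum]
          congr 1
          · exact Finset.sum_congr rfl fun p _ => by ring
          · ring
    _ = ∑ i, ∑ p, c * (μ p * ((φ p i * x i) * ∑ j, φ p j * y j))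
          + ∑ i, lam * (x i * y i) := Finset.sum_add_distrib
    _ = c * ∑ p, μ p * ((∑ i, φ p i * x i) * ∑ i, φ p i * y i) + lam * ∑ i, x i * y i := by
        congr 1
        · rw [Finset.sum_comm, Finset.mul_sum]
          refine Finset.sum_congr rfl fun p _ => ?_
          calc ∑ i, c * (μ p * ((φ p i * x i) * ∑ j, φ p j * y j))
              = ∑ i, (c * (μ p * ∑ j, φ p j * y j)) * (φ p i * x i) :=
                Finset.sum_congr rfl fun i _ => by ring
            _ = (c * (μ p * ∑ j, φ p j * y j)) * ∑ i, φ p i * x i :=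
                (Finset.mul_sum _ _ _).symm
            _ = c * (μ p * ((∑ i, φ p i * x i) * ∑ i, φ p i * y i)) := by ring
        · exact (Finset.mul_sum _ _ _).symm

/-- One-step back inequality for the true low-rank transition model. -/
theorem one_step_back_true_model
    {S A : Type*} [Fintype S] [Nonempty S] [Fintype A] [Nonempty A]
    {d n : ℕ} (hd : 1 ≤ d) (hn : 1 ≤ n)
    {lam B : ℝ} (hlam : 0 < lam) (hB : 0 < B)
    (φ : S × A → Fin d → ℝ) (hφ : ∀ p, l2norm (φ p) ≤ 1)
    (w : S → Fin d → ℝ)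
    (P : S × A → S → ℝ) (hP : ∀ p s', P p s' = ∑ j, φ p j * w s' j)
    (hPpos : ∀ p s', 0 ≤ P p s') (hPsum : ∀ p, ∑ s', P p s' = 1)
    (hw : ∀ l : S → ℝ, (∀ s', l s' ∈ Set.Icc (0 : ℝ) 1) →
      l2norm (fun j => ∑ s', w s' j * l s') ≤ Real.sqrt d)
    (μ : S × A → ℝ) (hμpos : ∀ p, 0 ≤ μ p) (hμsum : ∑ p, μ p = 1)
    (Sig : Matrix (Fin d) (Fin d) ℝ)
    (hSig : Sig = (n : ℝ) • (∑ p, μ p • vecMulVec (φ p) (φ p)) +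
      lam • (1 : Matrix (Fin d) (Fin d) ℝ))
    (ν : S × A → ℝ)
    (hν : ∀ p : S × A, ν p = (1 / (Fintype.card A : ℝ)) * ∑ p', μ p' * P p' p.1)
    (q' : S × A → ℝ) (hq'pos : ∀ p, 0 ≤ q' p) (hq'sum : ∑ p, q' p = 1)
    (pol : S → A → ℝ) (hpolpos : ∀ s a, 0 ≤ pol s a) (hpolsum : ∀ s, ∑ a, pol s a = 1)
    (q : S × A → ℝ)
    (hq : ∀ p : S × A, q p = ∑ p', q' p' * P p' p.1 * pol p.1 p.2) :
    ∀ g : S × A → ℝ, (∀ p, g p ∈ Set.Icc (0 : ℝ) B) →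
      ((∑ p, q p * g p) ≤
        (∑ p, q' p * matNorm Sig⁻¹ (φ p)) *
          Real.sqrt ((n : ℝ) * (Fintype.card A : ℝ) * (∑ p, ν p * g p ^ 2)
            + B ^ 2 * lam * d))
      ∧
      (∀ ξ : S → ℝ, (∀ s, 0 ≤ ξ s) → (∑ s, ξ s = 1) →
        ∀ pol' : S → A → ℝ, (∀ s a, 0 ≤ pol' s a) → (∀ s, ∑ a, pol' s a = 1) →
          (∑ s, ∑ a, ξ s * pol' s a * g (s, a)) ≤
            Real.sqrt ((Fintype.card A : ℝ) *
              ∑ p : S × A, (ξ p.1 / (Fintype.card A : ℝ)) * g p ^ 2)) := by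
  intro g hg
  have hg0 : ∀ p, 0 ≤ g p := fun p => (hg p).1
  have hgB : ∀ p, g p ≤ B := fun p => (hg p).2
  have hcA : (0 : ℝ) < (Fintype.card A : ℝ) := by
    exact_mod_cast Fintype.card_pos
  constructor
  · -- main part
    set h : S → ℝ := fun s => ∑ a, pol s a * g (s, a) with hh
    set θ : Fin d → ℝ := fun j => ∑ s, w s j * h s with hθ
    have hh0 : ∀ s, 0 ≤ h s := fun s =>
      Finset.sum_nonneg fun a _ => mul_nonneg (hpolpos s a) (hg0 _)
    have hhB : ∀ s, h s ≤ B := by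
      intro s
      calc h s ≤ ∑ a, pol s a * B :=
            Finset.sum_le_sum fun a _ =>
              mul_le_mul_of_nonneg_left (hgB (s, a)) (hpolpos s a)
        _ = B := by rw [← Finset.sum_mul, hpolsum, one_mul]
    have idA : ∀ p' : S × A, (∑ s, P p' s * h s) = φ p' ⬝ᵥ θ := by
      intro p'
      calc ∑ s, P p' s * h s = ∑ s, ∑ j, φ p' j * (w s j * h s) := by
            refine Finset.sum_congr rfl fun s _ => ?_
            rw [hP, Finset.sum_mul]
            exact Finset.sum_congr rfl fun j _ => by ring
        _ = ∑ j, ∑ s, φ p' j * (w s j * h s) := Finset.sum_comm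
        _ = ∑ j, φ p' j * θ j :=
            Finset.sum_congr rfl fun j _ => (Finset.mul_sum _ _ _).symm
        _ = φ p' ⬝ᵥ θ := rfl
    have idB : ∑ p, q p * g p = ∑ p', q' p' * (φ p' ⬝ᵥ θ) := by
      calc ∑ p, q p * g p
          = ∑ p : S × A, ∑ p', q' p' * P p' p.1 * pol p.1 p.2 * g p :=
            Finset.sum_congr rfl fun p _ => by rw [hq, Finset.sum_mul]
        _ = ∑ p', ∑ p : S × A, q' p' * P p' p.1 * pol p.1 p.2 * g p := Finset.sum_comm
        _ = ∑ p', q' p' * (φ p' ⬝ᵥ θ) := by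
            refine Finset.sum_congr rfl fun p' _ => ?_
            rw [← idA p']
            rw [Fintype.sum_prod_type]
            calc ∑ s, ∑ a, q' p' * P p' s * pol s a * g (s, a)
                = ∑ s, (q' p' * P p' s) * h s := by
                  refine Finset.sum_congr rfl fun s _ => ?_
                  rw [hh, Finset.mul_sum]
                  exact Finset.sum_congr rfl fun a _ => by ring
              _ = q' p' * ∑ s, P p' s * h s := by
                  rw [Finset.mul_sum]
                  exact Finset.sum_congr rfl fun s _ => by ring
    have hquad : ∀ x y : Fin d → ℝ, x ⬝ᵥ Sig *ᵥ y
        = (n : ℝ) * ∑ p, μ p * ((φ p ⬝ᵥ x) * (φ p ⬝ᵥ y)) + lam * (x ⬝ᵥ y) := by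
      intro x y; rw [hSig]; exact quad_eq φ μ _ lam x y
    have hsym : ∀ x y : Fin d → ℝ, x ⬝ᵥ Sig *ᵥ y = y ⬝ᵥ Sig *ᵥ x := by
      intro x y
      rw [hquad, hquad, dotProduct_comm x y,
        Finset.sum_congr rfl fun p (_ : p ∈ Finset.univ) =>
          (by ring : μ p * ((φ p ⬝ᵥ x) * (φ p ⬝ᵥ y)) = μ p * ((φ p ⬝ᵥ y) * (φ p ⬝ᵥ x)))]
    have hdotself : ∀ x : Fin d → ℝ, 0 ≤ x ⬝ᵥ x := fun x =>
      Finset.sum_nonneg fun i _ => mul_self_nonneg (x i)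
    have hpsd : ∀ x : Fin d → ℝ, 0 ≤ x ⬝ᵥ Sig *ᵥ x := by
      intro x
      rw [hquad]
      have h1 : 0 ≤ ∑ p, μ p * ((φ p ⬝ᵥ x) * (φ p ⬝ᵥ x)) :=
        Finset.sum_nonneg fun p _ => mul_nonneg (hμpos p) (mul_self_nonneg _)
      have h2 : 0 ≤ lam * (x ⬝ᵥ x) := mul_nonneg hlam.le (hdotself x)
      have h3 : (0 : ℝ) ≤ (n : ℝ) := Nat.cast_nonneg n
      nlinarith
    have hstar : ∀ x : Fin d → ℝ, star x = x := fun x => star_trivial x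
    have hPD : Sig.PosDef := by
      refine Matrix.PosDef.of_dotProduct_mulVec_pos ?_ ?_
      · rw [Matrix.IsHermitian, Matrix.conjTranspose_eq_transpose_of_trivial]
        ext i j
        rw [Matrix.transpose_apply, hSig]
        simp only [Matrix.add_apply, Matrix.smul_apply, Matrix.sum_apply,
          Matrix.vecMulVec_apply, Matrix.one_apply, smul_eq_mul]
        congr 1
        · congr 1
          exact Finset.sum_congr rfl fun p _ => by ring
        · by_cases hij : i = j
          · simp [hij]
          · simp [hij, Ne.symm hij]
      · intro x hx
        rw [hstar, hquad]
        have h1 : 0 ≤ ∑ p, μ p * ((φ p ⬝ᵥ x) * (φ p ⬝ᵥ x)) :=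
          Finset.sum_nonneg fun p _ => mul_nonneg (hμpos p) (mul_self_nonneg _)
        have h2 : 0 < x ⬝ᵥ x := by
          obtain ⟨i, hi⟩ := Function.ne_iff.mp hx
          refine Finset.sum_pos' (fun j _ => mul_self_nonneg (x j)) ⟨i, Finset.mem_univ i, ?_⟩
          exact mul_self_pos.mpr hi
        have h3 : (0 : ℝ) ≤ (n : ℝ) := Nat.cast_nonneg n
        nlinarith
    have hdet : IsUnit Sig.det := isUnit_iff_ne_zero.mpr (ne_of_gt hPD.det_pos)
    have hinvPSD : ∀ x : Fin d → ℝ, 0 ≤ x ⬝ᵥ Sig⁻¹ *ᵥ x := by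
      intro x
      by_cases hx : x = 0
      · simp [hx]
      · have := (hPD.inv.dotProduct_mulVec_pos hx).le
        rwa [hstar] at this
    -- Cauchy-Schwarz with the Sig norm
    have cs : ∀ v : Fin d → ℝ,
        (v ⬝ᵥ θ) ^ 2 ≤ (v ⬝ᵥ Sig⁻¹ *ᵥ v) * (θ ⬝ᵥ Sig *ᵥ θ) := by
      intro v
      have h1 := psd_cs Sig hsym hpsd (Sig⁻¹ *ᵥ v) θ
      have hSu : Sig *ᵥ (Sig⁻¹ *ᵥ v) = v := by
        rw [Matrix.mulVec_mulVec, Matrix.mul_nonsing_inv _ hdet, Matrix.one_mulVec]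
      have e1 : (Sig⁻¹ *ᵥ v) ⬝ᵥ Sig *ᵥ θ = v ⬝ᵥ θ := by
        rw [hsym, hSu, dotProduct_comm]
      have e2 : (Sig⁻¹ *ᵥ v) ⬝ᵥ Sig *ᵥ (Sig⁻¹ *ᵥ v) = v ⬝ᵥ Sig⁻¹ *ᵥ v := by
        rw [hsym, hSu]; exact dotProduct_comm _ _
      rw [e1, e2] at h1
      exact h1
    -- bound on θᵀ Sig θ
    set C : ℝ := (n : ℝ) * (Fintype.card A : ℝ) * (∑ p, ν p * g p ^ 2) + B ^ 2 * lam * d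
      with hC
    have hθSigθ : θ ⬝ᵥ Sig *ᵥ θ ≤ C := by
      rw [hquad, hC]
      -- first piece
      have hip : ∀ p : S × A, (φ p ⬝ᵥ θ) * (φ p ⬝ᵥ θ) ≤ ∑ s, P p s * (∑ a, g (s, a) ^ 2) := by
        intro p
        have hj : (∑ s, P p s * h s) ^ 2 ≤ ∑ s, P p s * h s ^ 2 :=
          jensen_sq (P p) h (hPpos p) (le_of_eq (hPsum p))
        have hh2 : ∀ s, h s ^ 2 ≤ ∑ a, g (s, a) ^ 2 := by
          intro s
          have hj2 : (∑ a, pol s a * g (s, a)) ^ 2 ≤ ∑ a, pol s a * g (s, a) ^ 2 :=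
            jensen_sq (pol s) (fun a => g (s, a)) (hpolpos s) (le_of_eq (hpolsum s))
          have hpol1 : ∀ a, pol s a ≤ 1 := by
            intro a
            calc pol s a ≤ ∑ a, pol s a :=
                  Finset.single_le_sum (fun a _ => hpolpos s a) (Finset.mem_univ a)
              _ = 1 := hpolsum s
          calc h s ^ 2 ≤ ∑ a, pol s a * g (s, a) ^ 2 := hj2
            _ ≤ ∑ a, g (s, a) ^ 2 := Finset.sum_le_sum fun a _ =>
                mul_le_of_le_one_left (sq_nonneg _) (hpol1 a)
        calc (φ p ⬝ᵥ θ) * (φ p ⬝ᵥ θ) = (∑ s, P p s * h s) ^ 2 := by rw [idA p]; ring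
          _ ≤ ∑ s, P p s * h s ^ 2 := hj
          _ ≤ ∑ s, P p s * (∑ a, g (s, a) ^ 2) := Finset.sum_le_sum fun s _ =>
              mul_le_mul_of_nonneg_left (hh2 s) (hPpos p s)
      have hA : ∑ p, μ p * ((φ p ⬝ᵥ θ) * (φ p ⬝ᵥ θ))
          ≤ ∑ p, μ p * (∑ s, P p s * (∑ a, g (s, a) ^ 2)) :=
        Finset.sum_le_sum fun p _ => mul_le_mul_of_nonneg_left (hip p) (hμpos p)
      have hAeq : (Fintype.card A : ℝ) * (∑ p, ν p * g p ^ 2)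
          = ∑ p', μ p' * (∑ s, P p' s * (∑ a, g (s, a) ^ 2)) := by
        rw [Fintype.sum_prod_type (f := fun p => ν p * g p ^ 2)]
        calc (Fintype.card A : ℝ) * ∑ s, ∑ a, ν (s, a) * g (s, a) ^ 2
            = ∑ s, ∑ a, (∑ p', μ p' * P p' s) * g (s, a) ^ 2 := by
              rw [Finset.mul_sum]
              refine Finset.sum_congr rfl fun s _ => ?_
              rw [Finset.mul_sum]
              refine Finset.sum_congr rfl fun a _ => ?_
              rw [hν (s, a)]
              field_simp
          _ = ∑ s, ∑ a, ∑ p', μ p' * (P p' s * g (s, a) ^ 2) := by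
              refine Finset.sum_congr rfl fun s _ => Finset.sum_congr rfl fun a _ => ?_
              rw [Finset.sum_mul]
              exact Finset.sum_congr rfl fun p' _ => by ring
          _ = ∑ s, ∑ p', ∑ a, μ p' * (P p' s * g (s, a) ^ 2) :=
              Finset.sum_congr rfl fun s _ => Finset.sum_comm
          _ = ∑ p', ∑ s, ∑ a, μ p' * (P p' s * g (s, a) ^ 2) := Finset.sum_comm
          _ = ∑ p', μ p' * (∑ s, P p' s * (∑ a, g (s, a) ^ 2)) := by
              refine Finset.sum_congr rfl fun p' _ => ?_
              rw [Finset.mul_sum]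
              refine Finset.sum_congr rfl fun s _ => ?_
              rw [Finset.mul_sum, Finset.mul_sum]
      have hθθ : θ ⬝ᵥ θ ≤ B ^ 2 * d := by
        have hl := hw (fun s => h s / B) (by
          intro s
          constructor
          · exact div_nonneg (hh0 s) hB.le
          · rw [div_le_one hB]; exact hhB s)
        have hveq : ∀ j, θ j = B * ∑ s, w s j * (h s / B) := by
          intro j
          rw [hθ, Finset.mul_sum]
          refine Finset.sum_congr rfl fun s _ => ?_
          field_simp
        have hsq : (∑ j, (∑ s, w s j * (h s / B)) ^ 2) ≤ (d : ℝ) := by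
          have h1 : l2norm (fun j => ∑ s, w s j * (h s / B)) ≤ Real.sqrt d := hl
          have h2 : (0 : ℝ) ≤ ∑ j, (∑ s, w s j * (h s / B)) ^ 2 :=
            Finset.sum_nonneg fun j _ => sq_nonneg _
          have h1' : Real.sqrt (∑ j, (∑ s, w s j * (h s / B)) ^ 2) ≤ Real.sqrt d := h1
          have h3 := pow_le_pow_left₀ (Real.sqrt_nonneg _) h1' 2
          rwa [Real.sq_sqrt h2, Real.sq_sqrt (Nat.cast_nonneg d)] at h3
        calc θ ⬝ᵥ θ = ∑ j, B ^ 2 * (∑ s, w s j * (h s / B)) ^ 2 := by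
              refine Finset.sum_congr rfl fun j _ => ?_
              rw [hveq j]; ring
          _ = B ^ 2 * ∑ j, (∑ s, w s j * (h s / B)) ^ 2 := (Finset.mul_sum _ _ _).symm
          _ ≤ B ^ 2 * d := mul_le_mul_of_nonneg_left hsq (sq_nonneg B)
      have hn0 : (0 : ℝ) ≤ (n : ℝ) := Nat.cast_nonneg n
      calc (n : ℝ) * ∑ p, μ p * ((φ p ⬝ᵥ θ) * (φ p ⬝ᵥ θ)) + lam * (θ ⬝ᵥ θ)
          ≤ (n : ℝ) * ∑ p', μ p' * (∑ s, P p' s * (∑ a, g (s, a) ^ 2))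
            + lam * (B ^ 2 * d) := by
            have := mul_le_mul_of_nonneg_left hA hn0
            have := mul_le_mul_of_nonneg_left hθθ hlam.le
            linarith
        _ = (n : ℝ) * ((Fintype.card A : ℝ) * (∑ p, ν p * g p ^ 2)) + B ^ 2 * lam * d := by
            rw [hAeq]; ring
        _ = (n : ℝ) * (Fintype.card A : ℝ) * (∑ p, ν p * g p ^ 2) + B ^ 2 * lam * d := by
            ring
    have hCnn : 0 ≤ θ ⬝ᵥ Sig *ᵥ θ := hpsd θ
    have step : ∀ p' : S × A, φ p' ⬝ᵥ θ ≤ matNorm Sig⁻¹ (φ p') * Real.sqrt C := by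
      intro p'
      calc φ p' ⬝ᵥ θ ≤ |φ p' ⬝ᵥ θ| := le_abs_self _
        _ = Real.sqrt ((φ p' ⬝ᵥ θ) ^ 2) := (Real.sqrt_sq_eq_abs _).symm
        _ ≤ Real.sqrt ((φ p' ⬝ᵥ Sig⁻¹ *ᵥ φ p') * (θ ⬝ᵥ Sig *ᵥ θ)) :=
            Real.sqrt_le_sqrt (cs (φ p'))
        _ = matNorm Sig⁻¹ (φ p') * Real.sqrt (θ ⬝ᵥ Sig *ᵥ θ) := by
            rw [Real.sqrt_mul (hinvPSD (φ p'))]; rfl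
        _ ≤ matNorm Sig⁻¹ (φ p') * Real.sqrt C :=
            mul_le_mul_of_nonneg_left (Real.sqrt_le_sqrt hθSigθ) (Real.sqrt_nonneg _)
    calc ∑ p, q p * g p = ∑ p', q' p' * (φ p' ⬝ᵥ θ) := idB
      _ ≤ ∑ p', q' p' * (matNorm Sig⁻¹ (φ p') * Real.sqrt C) :=
          Finset.sum_le_sum fun p' _ =>
            mul_le_mul_of_nonneg_left (step p') (hq'pos p')
      _ = (∑ p, q' p * matNorm Sig⁻¹ (φ p)) * Real.sqrt C := by
          rw [Finset.sum_mul]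
          exact Finset.sum_congr rfl fun p' _ => (mul_assoc _ _ _).symm
  · -- second part
    intro ξ hξ0 hξ1 pol' hp0 hp1
    have hLHS : ∑ s, ∑ a, ξ s * pol' s a * g (s, a)
        = ∑ p : S × A, (ξ p.1 * pol' p.1 p.2) * g p := by
      rw [Fintype.sum_prod_type]
    have hx0 : 0 ≤ ∑ s, ∑ a, ξ s * pol' s a * g (s, a) :=
      Finset.sum_nonneg fun s _ => Finset.sum_nonneg fun a _ =>
        mul_nonneg (mul_nonneg (hξ0 s) (hp0 s a)) (hg0 _)
    have hsum1 : ∑ p : S × A, ξ p.1 * pol' p.1 p.2 = 1 := by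
      rw [Fintype.sum_prod_type]
      calc ∑ s, ∑ a, ξ s * pol' s a = ∑ s, ξ s * ∑ a, pol' s a :=
            Finset.sum_congr rfl fun s _ => (Finset.mul_sum _ _ _).symm
        _ = ∑ s, ξ s := Finset.sum_congr rfl fun s _ => by rw [hp1 s, mul_one]
        _ = 1 := hξ1
    have hyeq : (Fintype.card A : ℝ) * ∑ p : S × A, (ξ p.1 / (Fintype.card A : ℝ)) * g p ^ 2
        = ∑ p : S × A, ξ p.1 * g p ^ 2 := by
      rw [Finset.mul_sum]
      refine Finset.sum_congr rfl fun p _ => ?_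
      field_simp
    have hy0 : 0 ≤ ∑ p : S × A, ξ p.1 * g p ^ 2 :=
      Finset.sum_nonneg fun p _ => mul_nonneg (hξ0 p.1) (sq_nonneg _)
    rw [hyeq, Real.le_sqrt hx0 hy0]
    have hj := jensen_sq (fun p : S × A => ξ p.1 * pol' p.1 p.2) g
      (fun p => mul_nonneg (hξ0 p.1) (hp0 p.1 p.2)) (le_of_eq hsum1)
    have hp1le : ∀ s a, pol' s a ≤ 1 := by
      intro s a
      calc pol' s a ≤ ∑ a, pol' s a :=
            Finset.single_le_sum (fun a _ => hp0 s a) (Finset.mem_univ a)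
        _ = 1 := hp1 s
    calc (∑ s, ∑ a, ξ s * pol' s a * g (s, a)) ^ 2
        = (∑ p : S × A, (ξ p.1 * pol' p.1 p.2) * g p) ^ 2 := by rw [hLHS]
      _ ≤ ∑ p : S × A, (ξ p.1 * pol' p.1 p.2) * g p ^ 2 := hj
      _ ≤ ∑ p : S × A, ξ p.1 * g p ^ 2 := Finset.sum_le_sum fun p _ => by
          apply mul_le_mul_of_nonneg_right _ (sq_nonneg (g p))
          calc ξ p.1 * pol' p.1 p.2 ≤ ξ p.1 * 1 :=
                mul_le_mul_of_nonneg_left (hp1le p.1 p.2) (hξ0 p.1)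
            _ = ξ p.1 := mul_one _
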